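/- Let α, β, δ, x₀, y₀ be real numbers with α > β, δ > 0, y₀ > 0 and x₀ > y₀·δ/(α−β), and define x : ℝ → ℝ by x(t) = (x₀ + y₀·δ/(β−α))·e^{αt} − y₀·(δ/(β−α))·e^{βt}. If moreover α > 0, then x(t) → +∞ as t → ∞, and x(t) > 0 for all t ≥ 0. -/
import Mathlib


open Real Filter

/-- If `α > β`, `δ > 0`, `y₀ > 0`, `x₀ > y₀·δ/(α−β)` and `α > 0`,
the solution `x(t)` of the healthy-population ODE tends to `+∞`, and stays
positive for all `t ≥ 0`. -/
theorem healthy_population_escapes (α β δ x₀ y₀ : ℝ)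
    (hαβ : β < α) (hδ : 0 < δ) (hy₀ : 0 < y₀) (hx₀ : y₀ * δ / (α - β) < x₀)
    (hα : 0 < α)
    (x : ℝ → ℝ)
    (hx : ∀ t, x t = (x₀ + y₀ * δ / (β - α)) * exp (α * t)
        - y₀ * (δ / (β - α)) * exp (β * t)) :
    Tendsto x atTop atTop ∧ ∀ t : ℝ, 0 ≤ t → 0 < x t := by
  have hba : β - α < 0 := by linarith
  have hc : 0 < x₀ + y₀ * δ / (β - α) := by
    have heq : y₀ * δ / (β - α) = -(y₀ * δ / (α - β)) := by
      rw [show β - α = -(α - β) by ring, div_neg]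
    rw [heq]; linarith
  have hd : 0 < y₀ * (δ / (β - α)) * (-1) := by
    have : δ / (β - α) < 0 := div_neg_of_pos_of_neg hδ hba
    nlinarith
  have hd' : ∀ t : ℝ, 0 < -(y₀ * (δ / (β - α)) * exp (β * t)) := by
    intro t
    have := exp_pos (β * t)
    nlinarith
  have hlow : ∀ t : ℝ, (x₀ + y₀ * δ / (β - α)) * exp (α * t) ≤ x t := by
    intro t
    rw [hx t]
    have := hd' t
    linarith
  constructor
  · refine tendsto_atTop_mono hlow ?_
    exact Tendsto.const_mul_atTop hc
      (Real.tendsto_exp_atTop.comp (tendsto_id.const_mul_atTop hα))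
  · intro t ht
    have h1 : 0 < (x₀ + y₀ * δ / (β - α)) * exp (α * t) :=
      mul_pos hc (exp_pos _)
    have := hd' t
    rw [hx t]; linarith
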